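/- Let x ∈ {q,−1} and let (R^x_{u,w}) be the family of Kazhdan–Lusztig R^x-polynomials of a pircon system (P,S), satisfying the up-down symmetry, and consider the x-action of the operators T_M on 𝓜_P. Then for every M ∈ S and every m ∈ 𝓜_P, ι^x(T_M(m)) = q^{−1}·T_M(ι^x(m)) + (q^{−1}−1)·ι^x(m); equivalently, ι^x(h·m) = ι(h)·ι^x(m) for all h in the Hecke algebra of the Coxeter system (W_P,S), where ι denotes its Kazhdan–Lusztig bar involution (which sends T_M to T_M^{−1} = q^{−1}·T_M + (q^{−1}−1)). -/

import Mathlib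

open Polynomial LaurentPolynomial

noncomputable section

/-- A quasi special partial matching of a poset `P`: an involution `M : P → P` such that
for every `t`, either `M t ⋖ t`, `M t = t`, or `t ⋖ M t`, and whenever `t ⋖ u` and
`M t ≠ u`, then `M t < M u`. -/
def IsQSPM {P : Type*} [PartialOrder P] (M : P → P) : Prop :=
  Function.Involutive M ∧
  (∀ t : P, M t ⋖ t ∨ M t = t ∨ t ⋖ M t) ∧
  ∀ t u : P, t ⋖ u → M t ≠ u → M t < M u

/-- A quasi special partial matching of the order ideal `P_{≤w}`. -/
def IsQSPMOn {P : Type*} [PartialOrder P] (w : P) (M : P → P) : Prop :=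
  (∀ u : P, u ≤ w → M u ≤ w) ∧
  (∀ u : P, u ≤ w → M (M u) = u) ∧
  (∀ u : P, u ≤ w → M u ⋖ u ∨ M u = u ∨ u ⋖ M u) ∧
  ∀ u t : P, u ≤ w → t ≤ w → u ⋖ t → M u ≠ t → M u < M t

/-- A special partial matching of the order ideal `P_{≤w}` (whose maximum is `w`). -/
def IsSPMOn {P : Type*} [PartialOrder P] (w : P) (M : P → P) : Prop :=
  IsQSPMOn w M ∧ M w ⋖ w

/-- A pircon: for every non-minimal `x`, the order ideal `P_{≤x}` is finite and admits
a special partial matching. -/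
def IsPircon (P : Type*) [PartialOrder P] : Prop :=
  ∀ x : P, ¬ IsMin x → (Set.Iic x).Finite ∧ ∃ M : P → P, IsSPMOn x M

/-- A pircon system `(P,S)`: `S` is a set of quasi special partial matchings of `P` such
that every `w ≠ ⊥` is matched downwards by some `M ∈ S`. -/
def IsPirconSystem {P : Type*} [PartialOrder P] [OrderBot P] (S : Set (P → P)) : Prop :=
  (∀ M ∈ S, IsQSPM M) ∧ ∀ w : P, w ≠ ⊥ → ∃ M ∈ S, M w ⋖ w

/-- The defining properties of the family of Kazhdan--Lusztig `R^x`-polynomials of a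
pircon system `(P,S)`, where `x ∈ {q,-1} ⊆ ℤ[q]` (here `q` is the variable `X`). -/
def IsKLRFamily {P : Type*} [PartialOrder P] (S : Set (P → P)) (x : Polynomial ℤ)
    (R : P → P → Polynomial ℤ) : Prop :=
  (∀ u w : P, ¬ u ≤ w → R u w = 0) ∧
  (∀ w : P, R w w = 1) ∧
  ∀ M ∈ S, ∀ u w : P, M w ⋖ w →
    (M u ⋖ u → R u w = R (M u) (M w)) ∧
    (u ⋖ M u → R u w = (X - 1) * R u (M w) + X * R (M u) (M w)) ∧
    (M u = u → R u w = (X - 1 - x) * R u (M w))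

/-- The up-down symmetry for a family of Kazhdan--Lusztig `R^x`-polynomials. -/
def UpDownSymmetry {P : Type*} [PartialOrder P] (S : Set (P → P)) (x : Polynomial ℤ)
    (R : P → P → Polynomial ℤ) : Prop :=
  ∀ M ∈ S, ∀ u w : P, u ⋖ M u →
    (w ⋖ M w → R u w = R (M u) (M w)) ∧
    (M w ⋖ w → R u w = (X - 1) * R (M u) w + X * R (M u) (M w)) ∧
    (M w = w → R u w = (X - 1 - x) * R (M u) w)

/-!  The ring `A = ℤ[q^{1/2}, q^{-1/2}]` is realized as `LaurentPolynomial ℤ`, with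
`q^{1/2} = T 1` and hence `q = T 2`; the bar involution `q^{1/2} ↦ q^{-1/2}` is
`LaurentPolynomial.invert`.  The free `A`-module `𝓜_P = ⊕_{u ∈ P} A·m_u` is realized as
the finitely supported elements of `P → A`, the basis element `m_u` corresponding to the
indicator of `u`. -/

/-- Evaluation of a polynomial in `q` at `q = T 2`, i.e. the inclusion
`ℤ[q] → ℤ[q^{1/2}, q^{-1/2}]`. -/
def evq (p : Polynomial ℤ) : LaurentPolynomial ℤ :=
  Polynomial.aeval (T 2 : LaurentPolynomial ℤ) p

open Classical in
/-- The `y`-action of the operator `T_M` on `𝓜_P`, written in coordinates: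
`T_M(m_v) = m_{M v}` if `v ⋖ M v`; `T_M(m_v) = q·m_{M v} + (q-1)·m_v` if `M v ⋖ v`;
and `T_M(m_v) = y·m_v` if `M v = v`. -/
def TMact {P : Type*} [PartialOrder P] (M : P → P) (y : LaurentPolynomial ℤ)
    (f : P → LaurentPolynomial ℤ) : P → LaurentPolynomial ℤ := fun u =>
  if M u = u then y * f u
  else if M u < u then f (M u) + (T 2 - 1) * f u
  else T 2 * f (M u)

/-- The map `ι^x` on `𝓜_P`, written in coordinates:
`ι^x(Σ_v f_v·m_v) = Σ_v f̄_v·q^{-ρ(v)}·Σ_{u} (-1)^{ρ(u,v)}·R^x_{u,v}(q)·m_u`. -/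
def iotaAct {P : Type*} [PartialOrder P] (ρ : P → ℕ) (R : P → P → Polynomial ℤ)
    (f : P → LaurentPolynomial ℤ) : P → LaurentPolynomial ℤ := fun u =>
  ∑ᶠ v : P, invert (f v) * (T (-2 * (ρ v : ℤ)) * ((-1) ^ (ρ v - ρ u) * evq (R u v)))

/-- The involution `j_P` of `𝓜_P`: `j_P(a·m_w) = ā·(-q^{-1})^{ρ(w)}·m_w`. -/
def jPact {P : Type*} [PartialOrder P] (ρ : P → ℕ) (f : P → LaurentPolynomial ℤ) :
    P → LaurentPolynomial ℤ := fun w => invert (f w) * (-T (-2)) ^ (ρ w)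

/-- `deg f < k/2`. -/
def DegLtHalf (f : Polynomial ℤ) (k : ℤ) : Prop :=
  f = 0 ∨ 2 * (f.natDegree : ℤ) < k

/-- The Kazhdan--Lusztig--Stanley polynomials of the kernel `(R_{u,w})`: `P_{u,w} = 0`
unless `u ≤ w`, `P_{w,w} = 1`, `deg P_{u,w} < ρ(u,w)/2` for `u < w`, and
`q^{ρ(u,w)}·P_{u,w}(q⁻¹) = Σ_{u ≤ t ≤ w} R_{u,t}(q)·P_{t,w}(q)`. -/
def IsKLSFamily {P : Type*} [PartialOrder P] (ρ : P → ℕ)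
    (R Pp : P → P → Polynomial ℤ) : Prop :=
  (∀ u w : P, ¬ u ≤ w → Pp u w = 0) ∧
  (∀ w : P, Pp w w = 1) ∧
  (∀ u w : P, u < w → DegLtHalf (Pp u w) ((ρ w : ℤ) - (ρ u : ℤ))) ∧
  ∀ u w : P, u ≤ w →
    T (2 * ((ρ w : ℤ) - (ρ u : ℤ))) * invert (evq (Pp u w)) =
      ∑ᶠ t ∈ Set.Icc u w, evq (R u t) * evq (Pp t w)

/-- The Kazhdan--Lusztig element `C^x_w ∈ 𝓜_P`, in coordinates: its coefficient on `m_v`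
is `q^{ρ(w)/2}·(-1)^{ρ(v,w)}·q^{-ρ(v)}·P^x_{v,w}(q^{-1})`. -/
def Cel {P : Type*} [PartialOrder P] (ρ : P → ℕ) (Pp : P → P → Polynomial ℤ) (w : P) :
    P → LaurentPolynomial ℤ := fun v =>
  T (ρ w : ℤ) * ((-1) ^ (ρ w - ρ v) * (T (-2 * (ρ v : ℤ)) * invert (evq (Pp v w))))

/-- The Kazhdan--Lusztig element `C'^x_w ∈ 𝓜_P`, in coordinates: its coefficient on
`m_v` is `q^{-ρ(w)/2}·P^z_{v,w}(q)` (the family `Pp` fed here is `P^z`). -/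
def Cel' {P : Type*} [PartialOrder P] (ρ : P → ℕ) (Pp : P → P → Polynomial ℤ) (w : P) :
    P → LaurentPolynomial ℤ := fun v =>
  T (-(ρ w : ℤ)) * evq (Pp v w)

/-! ### Auxiliary definitions and lemmas for the proof -/

/-- The coefficient matrix of `ι^x`. -/
private def cMat {P : Type*} [PartialOrder P] (ρ : P → ℕ) (R : P → P → Polynomial ℤ)
    (u v : P) : LaurentPolynomial ℤ :=
  T (-2 * (ρ v : ℤ)) * ((-1) ^ (ρ v - ρ u) * evq (R u v))

private lemma evq_mul (p q : Polynomial ℤ) : evq (p * q) = evq p * evq q := map_mul _ _ _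
private lemma evq_add (p q : Polynomial ℤ) : evq (p + q) = evq p + evq q := map_add _ _ _
private lemma evq_sub (p q : Polynomial ℤ) : evq (p - q) = evq p - evq q := map_sub _ _ _
private lemma evq_one : evq (1 : Polynomial ℤ) = 1 := map_one _
private lemma evq_zero : evq (0 : Polynomial ℤ) = 0 := map_zero _
private lemma evq_X : evq (X : Polynomial ℤ) = T 2 := Polynomial.aeval_X _
private lemma evq_neg (p : Polynomial ℤ) : evq (-p) = - evq p := map_neg _ _
private lemma evq_negone : evq (-1 : Polynomial ℤ) = -1 := by rw [evq_neg, evq_one]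

/-- The rank function of a pircon is strictly monotone. -/
private lemma rho_mono {P : Type*} [PartialOrder P] (ρ : P → ℕ)
    (hρcov : ∀ a b : P, a ⋖ b → ρ b = ρ a + 1) (hP : IsPircon P) :
    ∀ u v : P, u < v → ρ u < ρ v := by
  have step : ∀ u v : P, u < v → ∃ z, u ≤ z ∧ z ⋖ v := by
    intro u v huv
    have hnm : ¬ IsMin v := fun h => huv.not_ge (h huv.le)
    have hfinS : {z : P | u ≤ z ∧ z < v}.Finite :=
      (hP v hnm).1.subset fun z hz => hz.2.le
    obtain ⟨z, hzS, hzmax⟩ :=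
      Set.Finite.exists_maximalFor id _ hfinS ⟨u, le_refl u, huv⟩
    refine ⟨z, hzS.1, hzS.2, fun w hzw hwv => ?_⟩
    exact absurd (hzmax ⟨hzS.1.trans hzw.le, hwv⟩ hzw.le) hzw.not_ge
  have key : ∀ n : ℕ, ∀ v : P, ρ v ≤ n → ∀ u : P, u < v → ρ u < ρ v := by
    intro n
    induction n with
    | zero =>
      intro v hv u huv
      obtain ⟨z, _, hz⟩ := step u v huv
      have := hρcov _ _ hz; omega
    | succ n ih =>
      intro v hv u huv
      obtain ⟨z, huz, hz⟩ := step u v huv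
      have hzv := hρcov _ _ hz
      rcases eq_or_lt_of_le huz with rfl | hlt
      · omega
      · have := ih z (by omega) u hlt; omega
  exact fun u v h => key (ρ v) v le_rfl u h

open Classical in
/-- The coefficient of `invert (m v)` in `ι^x (T_M m)` evaluated at `u`. -/
private def Lfun {P : Type*} [PartialOrder P] (M : P → P) (x : Polynomial ℤ) (ρ : P → ℕ)
    (R : P → P → Polynomial ℤ) (u v : P) : LaurentPolynomial ℤ :=
  if M v = v then invert (evq x) * cMat ρ R u v
  else if M v < v then (T (-2) - 1) * cMat ρ R u v + T (-2) * cMat ρ R u (M v)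
  else cMat ρ R u (M v)

open Classical in
/-- The coefficient of `invert (m v)` in `q⁻¹ T_M (ι^x m) + (q⁻¹-1) ι^x m` at `u`. -/
private def Rfun {P : Type*} [PartialOrder P] (M : P → P) (x : Polynomial ℤ) (ρ : P → ℕ)
    (R : P → P → Polynomial ℤ) (u v : P) : LaurentPolynomial ℤ :=
  if M u = u then (T (-2) * evq x + (T (-2) - 1)) * cMat ρ R u v
  else if M u < u then T (-2) * cMat ρ R (M u) v
  else cMat ρ R (M u) v + (T (-2) - 1) * cMat ρ R u v

open Classical in
private def AfunD {P : Type*} [PartialOrder P] (M : P → P) (x : Polynomial ℤ) (ρ : P → ℕ)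
    (R : P → P → Polynomial ℤ) (m : P → LaurentPolynomial ℤ) (u v : P) :
    LaurentPolynomial ℤ :=
  invert (m v) * (if M v = v then invert (evq x) * cMat ρ R u v
    else if M v < v then (T (-2) - 1) * cMat ρ R u v else 0)

open Classical in
private def BfunD {P : Type*} [PartialOrder P] (M : P → P) (x : Polynomial ℤ) (ρ : P → ℕ)
    (R : P → P → Polynomial ℤ) (m : P → LaurentPolynomial ℤ) (u v : P) :
    LaurentPolynomial ℤ :=
  invert (m (M v)) * (if M v = v then 0
    else if M v < v then cMat ρ R u v else T (-2) * cMat ρ R u v)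

/-- The key coefficient identity. -/
private lemma keyLemma {P : Type*} [PartialOrder P] (ρ : P → ℕ)
    (hρcov : ∀ a b : P, a ⋖ b → ρ b = ρ a + 1)
    (hmono : ∀ u v : P, u < v → ρ u < ρ v)
    {x : Polynomial ℤ} (hx : x = X ∨ x = -1)
    {R : P → P → Polynomial ℤ}
    (hR0 : ∀ u w : P, ¬ u ≤ w → R u w = 0) (hR1 : ∀ w : P, R w w = 1)
    {M : P → P} (hinv : Function.Involutive M)
    (hrec : ∀ u w : P, M w ⋖ w →
      (M u ⋖ u → R u w = R (M u) (M w)) ∧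
      (u ⋖ M u → R u w = (X - 1) * R u (M w) + X * R (M u) (M w)) ∧
      (M u = u → R u w = (X - 1 - x) * R u (M w)))
    (hud : ∀ u w : P, u ⋖ M u →
      (w ⋖ M w → R u w = R (M u) (M w)) ∧
      (M w ⋖ w → R u w = (X - 1) * R (M u) w + X * R (M u) (M w)) ∧
      (M w = w → R u w = (X - 1 - x) * R (M u) w))
    (htri : ∀ t : P, M t ⋖ t ∨ M t = t ∨ t ⋖ M t)
    (u v : P) :
    Lfun M x ρ R u v = Rfun M x ρ R u v := by
  have h1 : (T 2 : LaurentPolynomial ℤ) * T (-2) = 1 := by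
    rw [← T_add, show (2 : ℤ) + (-2) = 0 from by norm_num, T_zero]
  have hiy : invert (evq x) = T (-2) * evq x + (T (-2) - 1) := by
    rcases hx with rfl | rfl
    · rw [evq_X, invert_T]
      linear_combination -h1
    · rw [evq_negone, map_neg, map_one]
      ring
  have hyy : evq x * (T 2 - 1 - evq x) = -(T 2) := by
    rcases hx with rfl | rfl
    · rw [evq_X]; ring
    · rw [evq_negone]; ring
  have hxne : (X - 1 - x : Polynomial ℤ) ≠ 0 := by
    rcases hx with rfl | rfl
    · rw [show (X - 1 - X : Polynomial ℤ) = -1 from by ring]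
      simp
    · rw [show (X - 1 - (-1) : Polynomial ℤ) = X from by ring]
      exact Polynomial.X_ne_zero
  rcases htri u with hu | hu | hu
  · -- M u ⋖ u
    have hnu : ρ u = ρ (M u) + 1 := hρcov _ _ hu
    rcases htri v with hv | hv | hv
    · -- C5 : M v ⋖ v
      have hnv : ρ v = ρ (M v) + 1 := hρcov _ _ hv
      simp only [Lfun, Rfun, if_neg hu.lt.ne, if_pos hu.lt, if_neg hv.lt.ne, if_pos hv.lt]
      have hrecEq : R (M u) v = (X - 1) * R u v + X * R u (M v) := by
        have h := (hud (M u) v (by rw [hinv u]; exact hu)).2.1 hv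
        rw [hinv u] at h; exact h
      rcases eq_or_ne u v with rfl | hne
      · have hB0 : R u (M u) = 0 := hR0 _ _ hu.lt.not_ge
        rw [hR1 u, hB0] at hrecEq
        have hr' := congrArg evq hrecEq
        rw [evq_add, evq_mul, evq_mul, evq_sub, evq_X, evq_one, evq_zero] at hr'
        simp only [cMat]
        rw [hr', hR1 u, hB0, evq_one, evq_zero, Nat.sub_self,
          show ρ u - ρ (M u) = 1 from by omega,
          show (-2 * (ρ (M u) : ℤ)) = 2 + -2 * (ρ u : ℤ) from by omega, T_add]
        linear_combination (T (-2 * (ρ u : ℤ))) * h1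
      · by_cases hle : ρ u < ρ v
        · have hr' := congrArg evq hrecEq
          rw [evq_add, evq_mul, evq_mul, evq_sub, evq_X, evq_one] at hr'
          simp only [cMat]
          rw [hr', show ρ v - ρ u = (ρ (M v) - ρ u) + 1 from by omega,
            show ρ v - ρ (M u) = (ρ (M v) - ρ u) + 2 from by omega,
            show (-2 * (ρ (M v) : ℤ)) = 2 + -2 * (ρ v : ℤ) from by omega, T_add]
          linear_combination
            (-(T (-2 * (ρ v : ℤ)) * ((-1) ^ (ρ (M v) - ρ u) * evq (R u v)))) * h1
        · have hA0 : R u v = 0 := hR0 _ _ (fun h => by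
            rcases lt_or_eq_of_le h with h' | h'
            exacts [hle (hmono _ _ h'), hne h'])
          have hB0 : R u (M v) = 0 := hR0 _ _ (fun h =>
            hle (hmono _ _ (lt_of_le_of_lt h hv.lt)))
          have hD0 : R (M u) v = 0 := by rw [hrecEq, hA0, hB0]; ring
          simp [cMat, hA0, hB0, hD0, evq_zero]
    · -- C4 : M v = v
      simp only [Lfun, Rfun, if_pos hv, if_neg hu.lt.ne, if_pos hu.lt]
      rw [hiy]
      have hrecEq : R (M u) v = (X - 1 - x) * R u v := by
        have h := (hud (M u) v (by rw [hinv u]; exact hu)).2.2 hv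
        rw [hinv u] at h; exact h
      by_cases hle : ρ u ≤ ρ v
      · have hr' := congrArg evq hrecEq
        rw [evq_mul, evq_sub, evq_sub, evq_X, evq_one] at hr'
        simp only [cMat]
        rw [hr', show ρ v - ρ (M u) = (ρ v - ρ u) + 1 from by omega]
        linear_combination (T (-2 * (ρ v : ℤ)) * ((-1) ^ (ρ v - ρ u) * evq (R u v))) * h1
      · have hne : u ≠ v := by rintro rfl; exact hu.lt.ne hv
        have hA0 : R u v = 0 := hR0 _ _ (fun h => by
          rcases lt_or_eq_of_le h with h' | h'
          exacts [absurd (hmono _ _ h') (by omega), hne h'])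
        have hD0 : R (M u) v = 0 := by rw [hrecEq, hA0]; ring
        simp [cMat, hA0, hD0, evq_zero]
    · -- C6 : v ⋖ M v
      have hnv : ρ (M v) = ρ v + 1 := hρcov _ _ hv
      simp only [Lfun, Rfun, if_neg hv.lt.ne', if_neg hv.lt.asymm,
        if_neg hu.lt.ne, if_pos hu.lt]
      have hrecEq : R (M u) v = R u (M v) := by
        have h := (hud (M u) v (by rw [hinv u]; exact hu)).1 hv
        rw [hinv u] at h; exact h
      have hr' := congrArg evq hrecEq
      simp only [cMat]
      rw [hr', show ρ (M v) - ρ u = ρ v - ρ (M u) from by omega,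
        show (-2 * (ρ (M v) : ℤ)) = -2 + -2 * (ρ v : ℤ) from by omega, T_add]
      ring
  · -- M u = u
    rcases htri v with hv | hv | hv
    · -- C2 : M v ⋖ v
      have hnv : ρ v = ρ (M v) + 1 := hρcov _ _ hv
      simp only [Lfun, Rfun, if_pos hu, if_neg hv.lt.ne, if_pos hv.lt]
      have hrecEq : R u v = (X - 1 - x) * R u (M v) := (hrec u v hv).2.2 hu
      have hne : u ≠ v := by rintro rfl; exact hv.lt.ne hu
      by_cases hle : ρ u < ρ v
      · have hr' := congrArg evq hrecEq
        rw [evq_mul, evq_sub, evq_sub, evq_X, evq_one] at hr'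
        simp only [cMat]
        rw [hr', show ρ v - ρ u = (ρ (M v) - ρ u) + 1 from by omega,
          show (-2 * (ρ (M v) : ℤ)) = 2 + -2 * (ρ v : ℤ) from by omega, T_add]
        linear_combination
          (T (-2 * (ρ v : ℤ)) * ((-1) ^ (ρ (M v) - ρ u) * evq (R u (M v))) * T (-2)) * hyy
      · have hA0 : R u v = 0 := hR0 _ _ (fun h => by
          rcases lt_or_eq_of_le h with h' | h'
          exacts [hle (hmono _ _ h'), hne h'])
        have hB0 : R u (M v) = 0 := by
          have h0 : (X - 1 - x) * R u (M v) = 0 := by rw [← hrecEq, hA0]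
          rcases mul_eq_zero.mp h0 with h | h
          · exact absurd h hxne
          · exact h
        simp [cMat, hA0, hB0, evq_zero]
    · -- C1 : M v = v
      simp only [Lfun, Rfun, if_pos hu, if_pos hv]
      rw [hiy]
    · -- C3 : v ⋖ M v
      have hnv : ρ (M v) = ρ v + 1 := hρcov _ _ hv
      simp only [Lfun, Rfun, if_pos hu, if_neg hv.lt.ne', if_neg hv.lt.asymm]
      have hrecEq : R u (M v) = (X - 1 - x) * R u v := by
        have h := (hrec u (M v) (by rw [hinv v]; exact hv)).2.2 hu
        rw [hinv v] at h; exact h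
      by_cases hle : ρ u ≤ ρ v
      · have hr' := congrArg evq hrecEq
        rw [evq_mul, evq_sub, evq_sub, evq_X, evq_one] at hr'
        simp only [cMat]
        rw [hr', show ρ (M v) - ρ u = (ρ v - ρ u) + 1 from by omega,
          show (-2 * (ρ (M v) : ℤ)) = -2 + -2 * (ρ v : ℤ) from by omega, T_add]
        linear_combination (-(T (-2 * (ρ v : ℤ)) * ((-1) ^ (ρ v - ρ u) * evq (R u v)))) * h1
      · have hne : u ≠ v := by rintro rfl; exact hv.lt.ne' hu
        have hA0 : R u v = 0 := hR0 _ _ (fun h => by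
          rcases lt_or_eq_of_le h with h' | h'
          exacts [absurd (hmono _ _ h') (by omega), hne h'])
        have hB0 : R u (M v) = 0 := by rw [hrecEq, hA0]; ring
        simp [cMat, hA0, hB0, evq_zero]
  · -- u ⋖ M u
    have hnu : ρ (M u) = ρ u + 1 := hρcov _ _ hu
    rcases htri v with hv | hv | hv
    · -- C8 : M v ⋖ v
      have hnv : ρ v = ρ (M v) + 1 := hρcov _ _ hv
      simp only [Lfun, Rfun, if_neg hv.lt.ne, if_pos hv.lt,
        if_neg hu.lt.ne', if_neg hu.lt.asymm]
      have hrecEq : R u (M v) = R (M u) v := by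
        have h := (hud u (M v) hu).1 (by rw [hinv v]; exact hv)
        rw [hinv v] at h; exact h
      have hr' := congrArg evq hrecEq
      simp only [cMat]
      rw [hr', show ρ (M v) - ρ u = ρ v - ρ (M u) from by omega,
        show (-2 * (ρ (M v) : ℤ)) = 2 + -2 * (ρ v : ℤ) from by omega, T_add]
      linear_combination (T (-2 * (ρ v : ℤ)) * ((-1) ^ (ρ v - ρ (M u)) * evq (R (M u) v))) * h1
    · -- C7 : M v = v
      simp only [Lfun, Rfun, if_pos hv, if_neg hu.lt.ne', if_neg hu.lt.asymm]
      rw [hiy]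
      have hrecEq : R u v = (X - 1 - x) * R (M u) v := (hud u v hu).2.2 hv
      by_cases hle : ρ u < ρ v
      · have hr' := congrArg evq hrecEq
        rw [evq_mul, evq_sub, evq_sub, evq_X, evq_one] at hr'
        simp only [cMat]
        rw [hr', show ρ v - ρ u = (ρ v - ρ (M u)) + 1 from by omega]
        linear_combination
          (-(T (-2 * (ρ v : ℤ)) * ((-1) ^ (ρ v - ρ (M u)) * evq (R (M u) v)) * T (-2))) * hyy
          + (T (-2 * (ρ v : ℤ)) * ((-1) ^ (ρ v - ρ (M u)) * evq (R (M u) v))) * h1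
      · have hne : u ≠ v := by rintro rfl; exact hu.lt.ne' hv
        have hA0 : R u v = 0 := hR0 _ _ (fun h => by
          rcases lt_or_eq_of_le h with h' | h'
          exacts [hle (hmono _ _ h'), hne h'])
        have hD0 : R (M u) v = 0 := by
          have h0 : (X - 1 - x) * R (M u) v = 0 := by rw [← hrecEq, hA0]
          rcases mul_eq_zero.mp h0 with h | h
          · exact absurd h hxne
          · exact h
        simp [cMat, hA0, hD0, evq_zero]
    · -- C9 : v ⋖ M v
      have hnv : ρ (M v) = ρ v + 1 := hρcov _ _ hv
      simp only [Lfun, Rfun, if_neg hv.lt.ne', if_neg hv.lt.asymm,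
        if_neg hu.lt.ne', if_neg hu.lt.asymm]
      have hrecEq : R u (M v) = (X - 1) * R u v + X * R (M u) v := by
        have h := (hrec u (M v) (by rw [hinv v]; exact hv)).2.1 hu
        rw [hinv v] at h; exact h
      rcases eq_or_ne u v with rfl | hne
      · have hD0 : R (M u) u = 0 := hR0 _ _ hu.lt.not_ge
        rw [hR1 u, hD0] at hrecEq
        have hr' := congrArg evq hrecEq
        rw [evq_add, evq_mul, evq_mul, evq_sub, evq_X, evq_one, evq_zero] at hr'
        simp only [cMat]
        rw [hr', hR1 u, hD0, evq_one, evq_zero, Nat.sub_self,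
          show ρ (M u) - ρ u = 1 from by omega,
          show ρ u - ρ (M u) = 0 from by omega,
          show (-2 * (ρ (M u) : ℤ)) = -2 + -2 * (ρ u : ℤ) from by omega, T_add]
        linear_combination (-(T (-2 * (ρ u : ℤ)))) * h1
      · by_cases hle : ρ u < ρ v
        · have hr' := congrArg evq hrecEq
          rw [evq_add, evq_mul, evq_mul, evq_sub, evq_X, evq_one] at hr'
          simp only [cMat]
          rw [hr', show ρ v - ρ u = (ρ v - ρ (M u)) + 1 from by omega,
            show ρ (M v) - ρ u = (ρ v - ρ (M u)) + 2 from by omega,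
            show (-2 * (ρ (M v) : ℤ)) = -2 + -2 * (ρ v : ℤ) from by omega, T_add]
          linear_combination
            (T (-2 * (ρ v : ℤ)) * ((-1) ^ (ρ v - ρ (M u)) * (evq (R u v) + evq (R (M u) v)))) * h1
        · have hA0 : R u v = 0 := hR0 _ _ (fun h => by
            rcases lt_or_eq_of_le h with h' | h'
            exacts [hle (hmono _ _ h'), hne h'])
          have hD0 : R (M u) v = 0 := hR0 _ _ (fun h => by
            rcases lt_or_eq_of_le h with h' | h'
            · have := hmono _ _ h'; omega
            · have := congrArg ρ h'; omega)
          have hB0 : R u (M v) = 0 := by rw [hrecEq, hA0, hD0]; ring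
          simp [cMat, hA0, hB0, hD0, evq_zero]

/-- `ι^x` is `ι`-twisted equivariant for the `x`-action: for every `M ∈ S`,
`ι^x(T_M(m)) = q^{-1}·T_M(ι^x(m)) + (q^{-1}-1)·ι^x(m)`, i.e.
`ι^x(h · m) = ι(h) · ι^x(m)` on the Hecke algebra generators (`ι(T_M) = T_M^{-1} =
q^{-1}·T_M + (q^{-1}-1)`). -/
theorem iota_TM_twisted {P : Type*} [PartialOrder P] [OrderBot P]
    (ρ : P → ℕ) (hρ0 : ρ (⊥ : P) = 0) (hρcov : ∀ a b : P, a ⋖ b → ρ b = ρ a + 1)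
    (hP : IsPircon P) {S : Set (P → P)} (hS : IsPirconSystem S)
    {x : Polynomial ℤ} (hx : x = X ∨ x = -1)
    {R : P → P → Polynomial ℤ} (hR : IsKLRFamily S x R)
    (hud : UpDownSymmetry S x R)
    {M : P → P} (hM : M ∈ S)
    (m : P → LaurentPolynomial ℤ) (hm : (Function.support m).Finite) :
    iotaAct ρ R (TMact M (evq x) m) =
      fun u => T (-2) * TMact M (evq x) (iotaAct ρ R m) u
        + (T (-2) - 1) * iotaAct ρ R m u := by
  classical
  obtain ⟨hQSall, -⟩ := hS
  obtain ⟨hinv, htri, -⟩ := hQSall M hM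
  obtain ⟨hR0, hR1, hRrec⟩ := hR
  have hmono := rho_mono ρ hρcov hP
  have h1 : (T 2 : LaurentPolynomial ℤ) * T (-2) = 1 := by
    rw [← T_add, show (2 : ℤ) + (-2) = 0 from by norm_num, T_zero]
  have hgdef : ∀ (f : P → LaurentPolynomial ℤ) (w : P),
      iotaAct ρ R f w = ∑ᶠ v, invert (f v) * cMat ρ R w v := fun f w => rfl
  have hsup : ∀ (w : P) (F : P → LaurentPolynomial ℤ),
      (Function.support fun v => invert (m v) * F v).Finite := by
    intro w F
    apply hm.subset
    intro v hv
    simp only [Function.mem_support] at hv ⊢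
    intro h0
    exact hv (by rw [h0, map_zero, zero_mul])
  have hsA : ∀ u, (Function.support (AfunD M x ρ R m u)).Finite := by
    intro u
    apply hm.subset
    intro v hv
    simp only [Function.mem_support] at hv ⊢
    intro h0
    exact hv (by simp only [AfunD, h0, map_zero, zero_mul])
  have hsB : ∀ u, (Function.support (BfunD M x ρ R m u)).Finite := by
    intro u
    apply (hm.preimage (hinv.injective.injOn)).subset
    intro v hv
    simp only [Function.mem_support] at hv
    simp only [Set.mem_preimage, Function.mem_support]
    intro h0
    exact hv (by simp only [BfunD, h0, map_zero, zero_mul])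
  have hsBM : ∀ u, (Function.support fun v => BfunD M x ρ R m u (M v)).Finite := by
    intro u
    apply hm.subset
    intro v hv
    simp only [Function.mem_support] at hv ⊢
    intro h0
    exact hv (by simp only [BfunD, hinv v, h0, map_zero, zero_mul])
  have hRHS : ∀ u : P,
      T (-2) * TMact M (evq x) (iotaAct ρ R m) u + (T (-2) - 1) * iotaAct ρ R m u
        = ∑ᶠ v, invert (m v) * Rfun M x ρ R u v := by
    intro u
    rcases htri u with hu | hu | hu
    · -- M u ⋖ u
      simp only [TMact, if_neg hu.lt.ne, if_pos hu.lt]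
      have e0 : ∀ a b : LaurentPolynomial ℤ,
          T (-2) * (a + (T 2 - 1) * b) + (T (-2) - 1) * b = T (-2) * a := by
        intro a b; linear_combination b * h1
      rw [e0, hgdef m (M u),
        mul_finsum' (fun v => invert (m v) * cMat ρ R (M u) v) (T (-2)) (hsup (M u) _)]
      exact finsum_congr fun v => by
        simp only [Rfun, if_neg hu.lt.ne, if_pos hu.lt]; ring
    · -- M u = u
      simp only [TMact, if_pos hu]
      have e0 : ∀ b : LaurentPolynomial ℤ,
          T (-2) * (evq x * b) + (T (-2) - 1) * b
            = (T (-2) * evq x + (T (-2) - 1)) * b := by intro b; ring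
      rw [e0, hgdef m u,
        mul_finsum' (fun v => invert (m v) * cMat ρ R u v)
          (T (-2) * evq x + (T (-2) - 1)) (hsup u _)]
      exact finsum_congr fun v => by
        simp only [Rfun, if_pos hu]; ring
    · -- u ⋖ M u
      simp only [TMact, if_neg hu.lt.ne', if_neg hu.lt.asymm]
      calc T (-2) * (T 2 * iotaAct ρ R m (M u)) + (T (-2) - 1) * iotaAct ρ R m u
          = iotaAct ρ R m (M u) + (T (-2) - 1) * iotaAct ρ R m u := by
            linear_combination (iotaAct ρ R m (M u)) * h1
        _ = (∑ᶠ v, invert (m v) * cMat ρ R (M u) v)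
              + ∑ᶠ v, invert (m v) * ((T (-2) - 1) * cMat ρ R u v) := by
            rw [hgdef m (M u), hgdef m u,
              mul_finsum' (fun v => invert (m v) * cMat ρ R u v) (T (-2) - 1) (hsup u _)]
            congr 1
            exact finsum_congr fun v => by ring
        _ = ∑ᶠ v, (invert (m v) * cMat ρ R (M u) v
              + invert (m v) * ((T (-2) - 1) * cMat ρ R u v)) :=
            (finsum_add_distrib (hsup (M u) _) (hsup u _)).symm
        _ = ∑ᶠ v, invert (m v) * Rfun M x ρ R u v := finsum_congr fun v => by
            simp only [Rfun, if_neg hu.lt.ne', if_neg hu.lt.asymm]; ring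
  funext u
  show iotaAct ρ R (TMact M (evq x) m) u
      = T (-2) * TMact M (evq x) (iotaAct ρ R m) u + (T (-2) - 1) * iotaAct ρ R m u
  rw [hgdef]
  calc ∑ᶠ v, invert (TMact M (evq x) m v) * cMat ρ R u v
      = ∑ᶠ v, (AfunD M x ρ R m u v + BfunD M x ρ R m u v) := by
        apply finsum_congr
        intro v
        rcases htri v with hv | hv | hv
        · simp only [TMact, AfunD, BfunD, if_neg hv.lt.ne, if_pos hv.lt,
            map_add, map_mul, map_sub, map_one, invert_T]
          ring
        · simp only [TMact, AfunD, BfunD, if_pos hv, map_mul]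
          ring
        · simp only [TMact, AfunD, BfunD, if_neg hv.lt.ne', if_neg hv.lt.asymm,
            map_mul, invert_T]
          ring
    _ = (∑ᶠ v, AfunD M x ρ R m u v) + ∑ᶠ v, BfunD M x ρ R m u v :=
        finsum_add_distrib (hsA u) (hsB u)
    _ = (∑ᶠ v, AfunD M x ρ R m u v) + ∑ᶠ v, BfunD M x ρ R m u (M v) := by
        congr 1
        calc ∑ᶠ v, BfunD M x ρ R m u v
            = ∑ᶠ v, BfunD M x ρ R m u (Function.Involutive.toPerm M hinv v) :=
              (finsum_comp_equiv (Function.Involutive.toPerm M hinv)).symm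
          _ = ∑ᶠ v, BfunD M x ρ R m u (M v) := finsum_congr fun v => by
              rw [Function.Involutive.coe_toPerm]
    _ = ∑ᶠ v, (AfunD M x ρ R m u v + BfunD M x ρ R m u (M v)) :=
        (finsum_add_distrib (hsA u) (hsBM u)).symm
    _ = ∑ᶠ v, invert (m v) * Lfun M x ρ R u v := by
        apply finsum_congr
        intro v
        rcases htri v with hv | hv | hv
        · simp only [AfunD, BfunD, Lfun, hinv v, if_neg hv.lt.ne, if_pos hv.lt,
            if_neg hv.lt.ne', if_neg hv.lt.asymm]
          ring
        · simp only [AfunD, BfunD, Lfun, hinv v, if_pos hv, if_pos hv.symm]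
          ring
        · simp only [AfunD, BfunD, Lfun, hinv v, if_neg hv.lt.ne', if_neg hv.lt.asymm,
            if_neg hv.lt.ne, if_pos hv.lt]
          ring
    _ = ∑ᶠ v, invert (m v) * Rfun M x ρ R u v := finsum_congr fun v => by
        rw [keyLemma ρ hρcov hmono hx hR0 hR1 hinv (hRrec M hM) (hud M hM) htri u v]
    _ = T (-2) * TMact M (evq x) (iotaAct ρ R m) u + (T (-2) - 1) * iotaAct ρ R m u :=
        (hRHS u).symm

end
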